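/- Define constants c^{(N)}_{p,q} for N ∈ ℕ, 0 ≤ p, q with p + q ≤ 2N, by the recursion c^{(1)} given by 2(1 + x² - d²/dx²) and c^{(N+1)}_{p,q} = 2(c^{(N)}_{p,q} + c^{(N)}_{p-2,q} - c^{(N)}_{p,q-2} - (p+2)(p+1)c^{(N)}_{p+2,q} - 2(p+1)c^{(N)}_{p+1,q-1}), with c^{(N)}_{k,l} = 0 whenever k + l > 2N or k < 0 or l < 0. Then for all N and all p, q with p + q ≤ 2N, |c^{(N)}_{p,q}| ≤ 26^N · (2N - q)^{N - (p+q)/2}. -/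
import Mathlib

/-- The integer coefficients `c^{(N)}_{p,q}` of the expansion of
`2^N (1 + x² - d²/dx²)^N` as `Σ c^{(N)}_{p,q} x^p (d/dx)^q`, defined by the
recursion of the paper (with value `0` for negative indices; the base case
`N = 1` gives `c^{(1)}_{0,0} = 2`, `c^{(1)}_{2,0} = 2`, `c^{(1)}_{0,2} = -2`). -/
def hermCoeff : ℕ → ℤ → ℤ → ℤ
  | 0, p, q => if p = 0 ∧ q = 0 then 1 else 0
  | N + 1, p, q =>
    if p < 0 ∨ q < 0 then 0
    else 2 * (hermCoeff N p q + hermCoeff N (p - 2) q - hermCoeff N p (q - 2)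
      - (p + 2) * (p + 1) * hermCoeff N (p + 2) q
      - 2 * (p + 1) * hermCoeff N (p + 1) (q - 1))

lemma hermCoeff_vanish (N : ℕ) : ∀ (p q : ℤ), (2*(N:ℤ) < p + q ∨ p < 0 ∨ q < 0) → hermCoeff N p q = 0 := by
  induction N with
  | zero =>
    intro p q h
    rw [hermCoeff, if_neg]
    rintro ⟨rfl, rfl⟩
    simp at h
  | succ N ih =>
    intro p q h
    rw [hermCoeff]
    split
    · rfl
    · next hneg =>
      push_cast at h
      rw [ih p q (by omega), ih (p-2) q (by omega), ih p (q-2) (by omega),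
          ih (p+2) q (by omega), ih (p+1) (q-1) (by omega)]
      ring

-- monotonicity helper
lemma rpow_mono_helper (a b : ℕ) (r s : ℝ) (hab : a ≤ b) (hb : 1 ≤ b) (hr : 0 ≤ r)
    (hrs : r ≤ s) : ((a : ℕ) : ℝ) ^ r ≤ ((b : ℕ) : ℝ) ^ s := by
  calc ((a : ℕ) : ℝ) ^ r ≤ ((b : ℕ) : ℝ) ^ r := by
        apply Real.rpow_le_rpow (by positivity) (by exact_mod_cast hab) hr
    _ ≤ ((b : ℕ) : ℝ) ^ s := by
        apply Real.rpow_le_rpow_of_exponent_le (by exact_mod_cast hb) hrs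

/-- Bound on the coefficients: `|c^{(N)}_{p,q}| ≤ 26^N (2N-q)^{N-(p+q)/2}`. -/
theorem hermCoeff_bound (N : ℕ) (hN : 1 ≤ N) (p q : ℕ) (hpq : p + q ≤ 2 * N) :
    |((hermCoeff N (p : ℤ) (q : ℤ) : ℤ) : ℝ)| ≤
      (26 : ℝ) ^ N * (((2 * N - q : ℕ) : ℝ)) ^ ((N : ℝ) - ((p : ℝ) + q) / 2) := by
  induction N, hN using Nat.le_induction generalizing p q with
  | base =>
    have h2 : p ≤ 2 := by omega
    have h3 : q ≤ 2 := by omega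
    interval_cases p <;> interval_cases q <;> simp_all <;>
      norm_num [hermCoeff] <;> positivity
  | succ N hN ih =>
    -- notation
    set e : ℝ := (N : ℝ) - ((p : ℝ) + q) / 2 with he
    set K : ℝ := ((2 * N + 2 - q : ℕ) : ℝ) ^ (e + 1) with hKdef
    have hKnonneg : 0 ≤ K := Real.rpow_nonneg (by positivity) _
    have hPnonneg : (0 : ℝ) ≤ 26 ^ N := by positivity
    have hqN : q ≤ 2 * N + 2 := by omega
    -- the five term bounds
    have hA1 : |((hermCoeff N (p : ℤ) (q : ℤ) : ℤ) : ℝ)| ≤ 26 ^ N * K := by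
      by_cases h : p + q ≤ 2 * N
      · refine (ih p q h).trans ?_
        have hepos : 0 ≤ e := by
          rw [he]
          have : (p : ℝ) + q ≤ 2 * N := by exact_mod_cast h
          linarith
        apply mul_le_mul_of_nonneg_left _ hPnonneg
        exact rpow_mono_helper _ _ _ _ (by omega) (by omega) hepos (by linarith)
      · rw [hermCoeff_vanish N _ _ (by left; push_cast; omega)]
        simpa using by positivity
    have hA2 : |((hermCoeff N ((p : ℤ) - 2) (q : ℤ) : ℤ) : ℝ)| ≤ 26 ^ N * K := by
      by_cases h : 2 ≤ p
      · have hsum : (p - 2) + q ≤ 2 * N := by omega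
        have h0 := ih (p - 2) q hsum
        have hc1 : (((p - 2 : ℕ) : ℤ)) = (p : ℤ) - 2 := by omega
        have hc2 : (((p - 2 : ℕ) : ℝ)) = (p : ℝ) - 2 := by
          push_cast [h]; ring
        rw [hc1, hc2] at h0
        have hexp : (N : ℝ) - ((p : ℝ) - 2 + q) / 2 = e + 1 := by rw [he]; ring
        rw [hexp] at h0
        refine h0.trans ?_
        apply mul_le_mul_of_nonneg_left _ hPnonneg
        have he1 : (0 : ℝ) ≤ e + 1 := by
          have : (p : ℝ) + q ≤ 2 * N + 2 := by exact_mod_cast hpq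
          rw [he]; linarith
        exact rpow_mono_helper _ _ _ _ (by omega) (by omega) he1 le_rfl
      · rw [hermCoeff_vanish N _ _ (by right; left; omega)]
        simpa using by positivity
    have hA3 : |((hermCoeff N (p : ℤ) ((q : ℤ) - 2) : ℤ) : ℝ)| ≤ 26 ^ N * K := by
      by_cases h : 2 ≤ q
      · have hsum : p + (q - 2) ≤ 2 * N := by omega
        have h0 := ih p (q - 2) hsum
        have hc1 : (((q - 2 : ℕ) : ℤ)) = (q : ℤ) - 2 := by omega
        have hc2 : (((q - 2 : ℕ) : ℝ)) = (q : ℝ) - 2 := by push_cast [h]; ring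
        have hc3 : (2 * N - (q - 2)) = 2 * N + 2 - q := by omega
        rw [hc1, hc2, hc3] at h0
        have hexp : (N : ℝ) - ((p : ℝ) + ((q : ℝ) - 2)) / 2 = e + 1 := by rw [he]; ring
        rw [hexp] at h0
        exact h0
      · rw [hermCoeff_vanish N _ _ (by right; right; omega)]
        simpa using by positivity
    have hA4 : |(((p : ℝ) + 2) * ((p : ℝ) + 1) * ((hermCoeff N ((p : ℤ) + 2) (q : ℤ) : ℤ) : ℝ))|
        ≤ 26 ^ N * K := by
      rw [abs_mul, abs_of_nonneg (by positivity : (0:ℝ) ≤ ((p : ℝ) + 2) * ((p : ℝ) + 1))]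
      by_cases h : p + 2 + q ≤ 2 * N
      · have h0 := ih (p + 2) q h
        have hc1 : (((p + 2 : ℕ) : ℤ)) = (p : ℤ) + 2 := by omega
        have hc2 : (((p + 2 : ℕ) : ℝ)) = (p : ℝ) + 2 := by push_cast; ring
        rw [hc1, hc2] at h0
        have hexp : (N : ℝ) - ((p : ℝ) + 2 + q) / 2 = e - 1 := by rw [he]; ring
        rw [hexp] at h0
        set M : ℕ := 2 * N - q with hM
        have hMp : p + 2 ≤ M := by omega
        have hMpos : (0 : ℝ) < (M : ℝ) := by
          have : 2 ≤ M := by omega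
          positivity
        have he1 : (0 : ℝ) ≤ e - 1 := by
          have : (p : ℝ) + 2 + q ≤ 2 * N := by exact_mod_cast h
          rw [he]; linarith
        calc ((p : ℝ) + 2) * ((p : ℝ) + 1) * |((hermCoeff N ((p : ℤ) + 2) (q : ℤ) : ℤ) : ℝ)|
            ≤ ((p : ℝ) + 2) * ((p : ℝ) + 1) * (26 ^ N * (M : ℝ) ^ (e - 1)) := by
              apply mul_le_mul_of_nonneg_left h0 (by positivity)
          _ ≤ ((M : ℝ) * (M : ℝ)) * (26 ^ N * (M : ℝ) ^ (e - 1)) := by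
              apply mul_le_mul_of_nonneg_right _ (by positivity)
              have hpM : (p : ℝ) + 2 ≤ (M : ℝ) := by exact_mod_cast hMp
              nlinarith
          _ = 26 ^ N * ((M : ℝ) ^ (e + 1)) := by
              rw [show (e + 1 : ℝ) = 1 + 1 + (e - 1) by ring,
                Real.rpow_add hMpos, Real.rpow_add hMpos, Real.rpow_one]
              ring
          _ ≤ 26 ^ N * K := by
              apply mul_le_mul_of_nonneg_left _ hPnonneg
              exact rpow_mono_helper _ _ _ _ (by omega) (by omega) (by linarith) le_rfl
      · rw [hermCoeff_vanish N _ _ (by left; push_cast; omega)]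
        simpa using by positivity
    have hA5 : |(2 * ((p : ℝ) + 1) * ((hermCoeff N ((p : ℤ) + 1) ((q : ℤ) - 1) : ℤ) : ℝ))|
        ≤ 2 * (26 ^ N * K) := by
      rw [abs_mul, abs_of_nonneg (by positivity : (0:ℝ) ≤ 2 * ((p : ℝ) + 1))]
      by_cases h : 1 ≤ q ∧ p + q ≤ 2 * N
      · obtain ⟨hq1, hs⟩ := h
        have hsum : (p + 1) + (q - 1) ≤ 2 * N := by omega
        have h0 := ih (p + 1) (q - 1) hsum
        have hc1 : (((p + 1 : ℕ) : ℤ)) = (p : ℤ) + 1 := by omega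
        have hc2 : (((q - 1 : ℕ) : ℤ)) = (q : ℤ) - 1 := by omega
        have hc3 : (((p + 1 : ℕ) : ℝ)) = (p : ℝ) + 1 := by push_cast; ring
        have hc4 : (((q - 1 : ℕ) : ℝ)) = (q : ℝ) - 1 := by push_cast [hq1]; ring
        have hc5 : (2 * N - (q - 1)) = 2 * N + 1 - q := by omega
        rw [hc1, hc2, hc3, hc4, hc5] at h0
        have hexp : (N : ℝ) - ((p : ℝ) + 1 + ((q : ℝ) - 1)) / 2 = e := by rw [he]; ring
        rw [hexp] at h0
        set L : ℕ := 2 * N + 1 - q with hL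
        have hLpos : (0 : ℝ) < (L : ℝ) := by
          have : 1 ≤ L := by omega
          positivity
        have hepos : (0 : ℝ) ≤ e := by
          have : (p : ℝ) + q ≤ 2 * N := by exact_mod_cast hs
          rw [he]; linarith
        calc 2 * ((p : ℝ) + 1) * |((hermCoeff N ((p : ℤ) + 1) ((q : ℤ) - 1) : ℤ) : ℝ)|
            ≤ 2 * ((p : ℝ) + 1) * (26 ^ N * (L : ℝ) ^ e) := by
              apply mul_le_mul_of_nonneg_left h0 (by positivity)
          _ ≤ 2 * (L : ℝ) * (26 ^ N * (L : ℝ) ^ e) := by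
              apply mul_le_mul_of_nonneg_right _ (by positivity)
              have hpL : (p : ℝ) + 1 ≤ (L : ℝ) := by
                have : p + 1 ≤ L := by omega
                exact_mod_cast this
              linarith
          _ = 2 * (26 ^ N * ((L : ℝ) ^ (e + 1))) := by
              rw [show (e + 1 : ℝ) = 1 + e by ring, Real.rpow_add hLpos, Real.rpow_one]
              ring
          _ ≤ 2 * (26 ^ N * K) := by
              apply mul_le_mul_of_nonneg_left _ (by norm_num)
              apply mul_le_mul_of_nonneg_left _ hPnonneg
              exact rpow_mono_helper _ _ _ _ (by omega) (by omega) (by linarith) le_rfl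
      · rw [hermCoeff_vanish N _ _ (by push_cast; omega)]
        simpa using by positivity
    -- unfold the recursion
    have hrw : hermCoeff (N + 1) (p : ℤ) (q : ℤ) =
        2 * (hermCoeff N (p : ℤ) (q : ℤ) + hermCoeff N ((p : ℤ) - 2) (q : ℤ)
          - hermCoeff N (p : ℤ) ((q : ℤ) - 2)
          - ((p : ℤ) + 2) * ((p : ℤ) + 1) * hermCoeff N ((p : ℤ) + 2) (q : ℤ)
          - 2 * ((p : ℤ) + 1) * hermCoeff N ((p : ℤ) + 1) ((q : ℤ) - 1)) := by
      rw [hermCoeff]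
      rw [if_neg (show ¬((p : ℤ) < 0 ∨ (q : ℤ) < 0) by omega)]
    -- final combination
    have hbase : ((2 * (N + 1) - q : ℕ) : ℝ) = ((2 * N + 2 - q : ℕ) : ℝ) := by
      norm_cast
    have hexp2 : ((N + 1 : ℕ) : ℝ) - ((p : ℝ) + q) / 2 = e + 1 := by
      rw [he]; push_cast; ring
    rw [hbase, hexp2]
    have hT : |((hermCoeff (N + 1) (p : ℤ) (q : ℤ) : ℤ) : ℝ)| ≤ 12 * (26 ^ N * K) := by
      rw [hrw]
      push_cast
      rw [abs_mul]
      have habs : |(2 : ℝ)| = 2 := by norm_num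
      rw [habs]
      set T1 := ((hermCoeff N (p : ℤ) (q : ℤ) : ℤ) : ℝ)
      set T2 := ((hermCoeff N ((p : ℤ) - 2) (q : ℤ) : ℤ) : ℝ)
      set T3 := ((hermCoeff N (p : ℤ) ((q : ℤ) - 2) : ℤ) : ℝ)
      set T4 := (((p : ℝ) + 2) * ((p : ℝ) + 1) * ((hermCoeff N ((p : ℤ) + 2) (q : ℤ) : ℤ) : ℝ))
      set T5 := (2 * ((p : ℝ) + 1) * ((hermCoeff N ((p : ℤ) + 1) ((q : ℤ) - 1) : ℤ) : ℝ))
      have h1 := le_abs_self T1; have h1' := neg_abs_le T1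
      have h2 := le_abs_self T2; have h2' := neg_abs_le T2
      have h3 := le_abs_self T3; have h3' := neg_abs_le T3
      have h4 := le_abs_self T4; have h4' := neg_abs_le T4
      have h5 := le_abs_self T5; have h5' := neg_abs_le T5
      have : |T1 + T2 - T3 - T4 - T5| ≤ 6 * (26 ^ N * K) := by
        rw [abs_le]
        constructor <;> linarith
      linarith
    refine hT.trans ?_
    have : (26 : ℝ) ^ (N + 1) = 26 * 26 ^ N := by ring
    rw [this]
    nlinarith
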